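/- arXiv:1903.09963 — 5 statements merged into one kernel-verified Lean document; each statement's English description precedes it below -/
import Mathlib

section
/- Let n ≥ 3 and let A be a primitive (0,1) companion matrix of order n with positive trace (i.e., a_{n,n} = 1). Then exp(A) = n + m(V_1), where V_1 = {i ∈ [1,n] : a_{n,i} = 0} and m(V_1) is the length of the longest run of consecutive integers contained in V_1 (with m(∅) = 0). -/
open Matrix BigOperators

/-- A nonnegative square matrix is primitive if some positive power has all entries positive. -/
def IsPrimitive {n : ℕ} (A : Matrix (Fin n) (Fin n) ℝ) : Prop :=
  ∃ m : ℕ, 0 < m ∧ ∀ i j, 0 < (A ^ m) i j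

/-- The exponent of a primitive matrix: the least positive `m` with `A ^ m > 0`. -/
noncomputable def matExp {n : ℕ} (A : Matrix (Fin n) (Fin n) ℝ) : ℕ :=
  sInf {m : ℕ | 0 < m ∧ ∀ i j, 0 < (A ^ m) i j}

/-- `(0,1)` companion matrix: superdiagonal ones on the first `n-1` rows,
arbitrary `(0,1)` last row, all other entries zero. -/
def IsCompanion {n : ℕ} (A : Matrix (Fin n) (Fin n) ℝ) : Prop :=
  (∀ i j, A i j = 0 ∨ A i j = 1) ∧
  (∀ i j : Fin n, (i : ℕ) + 1 < n → (A i j = 1 ↔ (j : ℕ) = (i : ℕ) + 1))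

/-- `exp(A:i,j)`: least positive `k` such that `(A^l) i j > 0` for all `l ≥ k`. -/
noncomputable def expIJ {n : ℕ} (A : Matrix (Fin n) (Fin n) ℝ) (i j : Fin n) : ℕ :=
  sInf {k : ℕ | 0 < k ∧ ∀ l, k ≤ l → 0 < (A ^ l) i j}

/-- `exp(A:i)`: least positive `p` such that every entry of row `i` of `A ^ p` is positive. -/
noncomputable def expRow {n : ℕ} (A : Matrix (Fin n) (Fin n) ℝ) (i : Fin n) : ℕ :=
  sInf {p : ℕ | 0 < p ∧ ∀ j, 0 < (A ^ p) i j}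

/-- The digraph of `A` has an elementary cycle of length `k`. -/
def HasElemCycle {n : ℕ} (A : Matrix (Fin n) (Fin n) ℝ) (k : ℕ) : Prop :=
  0 < k ∧ ∃ c : ℕ → Fin n, c k = c 0 ∧
    (∀ i j, i < k → j < k → c i = c j → i = j) ∧
    ∀ i < k, A (c i) (c (i + 1)) = 1

/-- `m(U)`: the maximal length of a run of consecutive integers contained in `U`. -/
noncomputable def runMax (U : Set ℕ) : ℕ :=
  sSup {k : ℕ | ∃ a : ℕ, ∀ t < k, a + t ∈ U}

/-- The Frobenius number of a set `L`: the least `N` such that every `m ≥ N` is a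
nonnegative integer combination of elements of `L`. -/
noncomputable def frobNum (L : Set ℕ) : ℕ :=
  sInf {N : ℕ | ∀ m, N ≤ m → m ∈ AddSubmonoid.closure L}

/-- Irreducibility: for all `i j` there is a walk of some positive length from `i` to `j`. -/
def IsIrreducibleMat {n : ℕ} (A : Matrix (Fin n) (Fin n) ℝ) : Prop :=
  ∀ i j, ∃ k : ℕ, 0 < k ∧ 0 < (A ^ k) i j

namespace Stmt4Aux

variable {n : ℕ}

lemma powNonneg (A : Matrix (Fin n) (Fin n) ℝ)
    (h01 : ∀ i j, A i j = 0 ∨ A i j = 1) :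
    ∀ (l : ℕ) (i j : Fin n), 0 ≤ (A ^ l) i j := by
  intro l
  induction l with
  | zero =>
    intro i j
    simp only [pow_zero, Matrix.one_apply]
    split <;> norm_num
  | succ l ih =>
    intro i j
    rw [pow_succ, Matrix.mul_apply]
    refine Finset.sum_nonneg fun k _ => mul_nonneg (ih i k) ?_
    rcases h01 k j with h | h <;> simp [h]

lemma posIff (hn : 0 < n) (A : Matrix (Fin n) (Fin n) ℝ)
    (h01 : ∀ i j, A i j = 0 ∨ A i j = 1)
    (hrow : ∀ i j : Fin n, (i : ℕ) + 1 < n → (A i j = 1 ↔ (j : ℕ) = (i : ℕ) + 1))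
    (htr : A ⟨n - 1, by omega⟩ ⟨n - 1, by omega⟩ = 1) :
    ∀ (l : ℕ) (i j : Fin n), 0 < (A ^ l) i j ↔
      ((j : ℕ) = (i : ℕ) + l ∨
       ∃ j0 : Fin n, (j0 : ℕ) ≤ (j : ℕ) ∧ A ⟨n - 1, by omega⟩ j0 = 1 ∧
         (n - 1 - (i : ℕ)) + 1 + ((j : ℕ) - (j0 : ℕ)) ≤ l) := by
  intro l
  induction l with
  | zero =>
    intro i j
    simp only [pow_zero, Matrix.one_apply]
    constructor
    · intro h
      split_ifs at h with hij
      · subst hij; left; omega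
      · exact absurd h (lt_irrefl 0)
    · rintro (h | ⟨j0, _, _, hle⟩)
      · have : i = j := Fin.ext (by omega)
        simp [this]
      · omega
  | succ l ih =>
    intro i j
    have key : 0 < (A ^ (l + 1)) i j ↔ ∃ k : Fin n, A i k = 1 ∧ 0 < (A ^ l) k j := by
      rw [pow_succ', Matrix.mul_apply]
      constructor
      · intro h
        by_contra hc
        push_neg at hc
        have hz : ∀ k ∈ Finset.univ, A i k * (A ^ l) k j = 0 := by
          intro k _
          rcases h01 i k with h0 | h1
          · simp [h0]
          · have h2 : (A ^ l) k j = 0 :=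
              le_antisymm (hc k h1) (powNonneg A h01 l k j)
            simp [h2]
        rw [Finset.sum_eq_zero hz] at h
        exact absurd h (lt_irrefl 0)
      · rintro ⟨k, hk1, hk2⟩
        refine Finset.sum_pos'
          (fun k' _ => mul_nonneg ?_ (powNonneg A h01 l k' j))
          ⟨k, Finset.mem_univ k, by rw [hk1]; simpa using hk2⟩
        rcases h01 i k' with h | h <;> simp [h]
    rw [key]
    by_cases hi : (i : ℕ) + 1 < n
    · constructor
      · rintro ⟨k, hk1, hk2⟩
        have hk : (k : ℕ) = (i : ℕ) + 1 := (hrow i k hi).mp hk1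
        rcases (ih k j).mp hk2 with h | ⟨j0, hj0, hr, hle⟩
        · left; omega
        · right; exact ⟨j0, hj0, hr, by omega⟩
      · rintro (h | ⟨j0, hj0, hr, hle⟩)
        · refine ⟨⟨(i : ℕ) + 1, hi⟩, (hrow i _ hi).mpr rfl, (ih _ j).mpr ?_⟩
          left; simp; omega
        · refine ⟨⟨(i : ℕ) + 1, hi⟩, (hrow i _ hi).mpr rfl, (ih _ j).mpr ?_⟩
          right; exact ⟨j0, hj0, hr, by simp; omega⟩
    · have hiv : (i : ℕ) = n - 1 := by have := i.isLt; omega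
      have hieq : i = ⟨n - 1, Nat.sub_lt hn Nat.one_pos⟩ := Fin.ext hiv
      have hAi : A i = A ⟨n - 1, Nat.sub_lt hn Nat.one_pos⟩ := by rw [hieq]
      have hAi' : A i = A ⟨n - 1, by omega⟩ := hAi
      constructor
      · rintro ⟨k, hk1, hk2⟩
        rw [hAi'] at hk1
        right
        rcases (ih k j).mp hk2 with h | ⟨j0, hj0, hr, hle⟩
        · exact ⟨k, by omega, hk1, by omega⟩
        · exact ⟨j0, hj0, hr, by omega⟩
      · rintro (h | ⟨j0, hj0, hr, hle⟩)
        · exfalso; have := j.isLt; omega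
        · have hle' : (j : ℕ) - (j0 : ℕ) ≤ l := by omega
          rcases eq_or_lt_of_le hle' with hq | hq
          · exact ⟨j0, by rw [hAi']; exact hr, (ih j0 j).mpr (Or.inl (by omega))⟩
          · refine ⟨⟨n - 1, Nat.sub_lt hn Nat.one_pos⟩, by rw [hAi]; exact htr,
              (ih _ j).mpr (Or.inr ⟨j0, hj0, hr, ?_⟩)⟩
            simp only [Fin.val_mk]
            omega

end Stmt4Aux


theorem stmt4 {n : ℕ} (hn : 3 ≤ n) (A : Matrix (Fin n) (Fin n) ℝ)
    (hA : IsCompanion A) (hP : _root_.IsPrimitive A)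
    (h1 : A ⟨n - 1, by omega⟩ ⟨0, by omega⟩ = 1)
    (htr : A ⟨n - 1, by omega⟩ ⟨n - 1, by omega⟩ = 1) :
    matExp A =
      n + runMax {m : ℕ | ∃ i : Fin n, (i : ℕ) = m ∧ A ⟨n - 1, by omega⟩ i = 0} := by
  obtain ⟨h01, hrow⟩ := hA
  have hn0 : 0 < n := by omega
  have hpi := Stmt4Aux.posIff hn0 A h01 hrow htr
  set V : Set ℕ := {m : ℕ | ∃ i : Fin n, (i : ℕ) = m ∧ A ⟨n - 1, by omega⟩ i = 0} with hV
  set K : Set ℕ := {k : ℕ | ∃ a : ℕ, ∀ t < k, a + t ∈ V} with hKdef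
  set M : ℕ := runMax V with hMdef
  have hMsup : M = sSup K := rfl
  have hK0 : (0 : ℕ) ∈ K := ⟨0, fun t ht => absurd ht (Nat.not_lt_zero t)⟩
  have hKbdd : BddAbove K := by
    refine ⟨n, fun k hk => ?_⟩
    obtain ⟨a, ha⟩ := hk
    rcases Nat.eq_zero_or_pos k with h | h
    · omega
    · obtain ⟨i, hi, _⟩ := ha (k - 1) (by omega)
      have := i.isLt
      omega
  have hMK : M ∈ K := hMsup ▸ Nat.sSup_mem ⟨0, hK0⟩ hKbdd
  have hmem : (n + M) ∈ {m : ℕ | 0 < m ∧ ∀ i j, 0 < (A ^ m) i j} := by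
    refine ⟨by omega, fun i j => ?_⟩
    rw [hpi (n + M) i j]
    right
    have hex : ∃ j0 : Fin n, (j0 : ℕ) ≤ (j : ℕ) ∧ A ⟨n - 1, by omega⟩ j0 = 1 ∧
        (j : ℕ) - (j0 : ℕ) ≤ M := by
      by_contra hc
      push_neg at hc
      by_cases hjM : (j : ℕ) ≤ M
      · have h0 := hc ⟨0, hn0⟩ (by simp) h1
        simp at h0
        omega
      · have hK1 : (M + 1) ∈ K := by
          refine ⟨(j : ℕ) - M, fun t ht => ?_⟩
        -- show (j - M + t) ∈ V
          refine ⟨⟨(j : ℕ) - M + t, by have := j.isLt; omega⟩, rfl, ?_⟩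
          rcases h01 ⟨n - 1, by omega⟩ ⟨(j : ℕ) - M + t, by have := j.isLt; omega⟩ with h0 | h1'
          · exact h0
          · exfalso
            have := hc ⟨(j : ℕ) - M + t, by have := j.isLt; omega⟩ (by simp; omega) h1'
            simp at this
            omega
        have := le_csSup hKbdd hK1
        omega
    obtain ⟨j0, hj0, hr, hle⟩ := hex
    exact ⟨j0, hj0, hr, by have := i.isLt; omega⟩
  have hlb : ∀ m ∈ {m : ℕ | 0 < m ∧ ∀ i j, 0 < (A ^ m) i j}, n + M ≤ m := by
    rintro m ⟨hm0, hpos⟩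
    have hnle : n ≤ m := by
      have := (hpi m ⟨0, hn0⟩ ⟨0, hn0⟩).mp (hpos _ _)
      rcases this with h | ⟨j0, hj0, hr, hle⟩
      · simp at h; omega
      · simp at hj0 hle
        omega
    by_cases hM : M = 0
    · omega
    · obtain ⟨a, ha⟩ := hMK
      obtain ⟨iV, hiV, hiV0⟩ := ha (M - 1) (by omega)
      have hkey := (hpi m ⟨0, hn0⟩ iV).mp (hpos _ _)
      rcases hkey with h | ⟨j0, hj0, hr, hle⟩
      · have := iV.isLt; simp at h; omega
      · have hj0a : (j0 : ℕ) < a := by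
          by_contra hge
          push_neg at hge
          obtain ⟨i2, hi2, hi20⟩ := ha ((j0 : ℕ) - a) (by omega)
          have hi2e : i2 = j0 := Fin.ext (by omega)
          rw [hi2e] at hi20
          rw [hi20] at hr
          norm_num at hr
        simp at hle
        omega
  show sInf {m : ℕ | 0 < m ∧ ∀ i j, 0 < (A ^ m) i j} = n + M
  exact le_antisymm (Nat.sInf_le hmem) (le_csInf ⟨_, hmem⟩ hlb)
end

section
/- For every n ≥ 3 and every integer t with n ≤ t ≤ 2(n-1), there exists a primitive (0,1) companion matrix A of order n with exp(A) = t. Consequently, the interval [n, 2(n-1)] is contained in the exponent set E(CP_n). -/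
open Matrix BigOperators

/-- The companion matrix with last row having ones at column `0` and columns `≥ s`. -/
def Cmat (n s : ℕ) : Matrix (Fin n) (Fin n) ℝ := fun i j =>
  if (i : ℕ) + 1 < n then (if (j : ℕ) = (i : ℕ) + 1 then 1 else 0)
  else (if (j : ℕ) = 0 ∨ s ≤ (j : ℕ) then 1 else 0)

lemma Cmat_nonneg (n s : ℕ) : ∀ i j, 0 ≤ Cmat n s i j := by
  intro i j; unfold Cmat; split_ifs <;> norm_num

lemma pow_entry_nonneg {n : ℕ} (A : Matrix (Fin n) (Fin n) ℝ) (hA : ∀ i j, 0 ≤ A i j) :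
    ∀ m i j, 0 ≤ (A ^ m) i j := by
  intro m
  induction m with
  | zero =>
    intro i j; rw [pow_zero, Matrix.one_apply]; split <;> norm_num
  | succ m ih =>
    intro i j; rw [pow_succ, Matrix.mul_apply]
    exact Finset.sum_nonneg fun k _ => mul_nonneg (ih i k) (hA k j)

lemma comp_pos {n : ℕ} {A : Matrix (Fin n) (Fin n) ℝ} (hA : ∀ i j, 0 ≤ A i j)
    {a b : ℕ} {i k j : Fin n} (h1 : 0 < (A ^ a) i k) (h2 : 0 < (A ^ b) k j) :
    0 < (A ^ (a + b)) i j := by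
  rw [pow_add, Matrix.mul_apply]
  exact Finset.sum_pos'
    (fun x _ => mul_nonneg (pow_entry_nonneg A hA a i x) (pow_entry_nonneg A hA b x j))
    ⟨k, Finset.mem_univ k, mul_pos h1 h2⟩

lemma Cmat_path (n s : ℕ) : ∀ (d : ℕ) (i j : Fin n), (j : ℕ) = (i : ℕ) + d →
    0 < (Cmat n s ^ d) i j := by
  intro d
  induction d with
  | zero =>
    intro i j h
    have : j = i := Fin.ext (by omega)
    subst this; rw [pow_zero, Matrix.one_apply_eq]; norm_num
  | succ d ih =>
    intro i j h
    have hj := j.isLt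
    have hi1 : (i : ℕ) + 1 < n := by omega
    have h1 : 0 < (Cmat n s ^ 1) i ⟨(i : ℕ) + 1, by omega⟩ := by
      rw [pow_one]; unfold Cmat
      rw [if_pos hi1, if_pos rfl]; norm_num
    have h2 : 0 < (Cmat n s ^ d) ⟨(i : ℕ) + 1, by omega⟩ j := by
      refine ih _ j ?_
      show (j : ℕ) = (i : ℕ) + 1 + d
      omega
    have hc := comp_pos (Cmat_nonneg n s) h1 h2
    rwa [show 1 + d = d + 1 by omega] at hc

lemma Cmat_loops (n s : ℕ) (hn : 1 ≤ n) (hs : s ≤ n - 1) :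
    ∀ (L : ℕ), 0 < (Cmat n s ^ L) (⟨n - 1, by omega⟩ : Fin n) ⟨n - 1, by omega⟩ := by
  intro L
  induction L with
  | zero => rw [pow_zero, Matrix.one_apply_eq]; norm_num
  | succ L ih =>
    have h1 : 0 < (Cmat n s ^ 1) (⟨n - 1, by omega⟩ : Fin n) ⟨n - 1, by omega⟩ := by
      rw [pow_one]; unfold Cmat
      rw [if_neg (by show ¬(n - 1 + 1 < n); omega),
          if_pos (by show (n - 1 : ℕ) = 0 ∨ s ≤ n - 1; omega)]
      norm_num
    exact comp_pos (Cmat_nonneg n s) ih h1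

lemma Cmat_reach (n s : ℕ) (hn : 3 ≤ n) (hs1 : 1 ≤ s) (hs2 : s ≤ n - 1)
    (i j : Fin n) (c L : ℕ) (hcn : c < n) (hcj : c ≤ (j : ℕ))
    (hcC : c = 0 ∨ s ≤ c)
    (hlen : (n - 1 - (i : ℕ)) + (L + (1 + ((j : ℕ) - c))) = n + s - 1) :
    0 < (Cmat n s ^ (n + s - 1)) i j := by
  have hi := i.isLt
  have hj := j.isLt
  have h1 : 0 < (Cmat n s ^ (n - 1 - (i : ℕ))) i ⟨n - 1, by omega⟩ := by
    refine Cmat_path n s _ i _ ?_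
    show (n - 1 : ℕ) = (i : ℕ) + (n - 1 - (i : ℕ))
    omega
  have h2 : 0 < (Cmat n s ^ L) (⟨n - 1, by omega⟩ : Fin n) ⟨n - 1, by omega⟩ :=
    Cmat_loops n s (by omega) hs2 L
  have h3 : 0 < (Cmat n s ^ 1) (⟨n - 1, by omega⟩ : Fin n) ⟨c, hcn⟩ := by
    rw [pow_one]; unfold Cmat
    rw [if_neg (by show ¬(n - 1 + 1 < n); omega),
        if_pos (by show (c : ℕ) = 0 ∨ s ≤ c; omega)]
    norm_num
  have h4 : 0 < (Cmat n s ^ ((j : ℕ) - c)) (⟨c, hcn⟩ : Fin n) j := by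
    refine Cmat_path n s _ _ _ ?_
    show (j : ℕ) = c + ((j : ℕ) - c)
    omega
  have hc := comp_pos (Cmat_nonneg n s) h1
    (comp_pos (Cmat_nonneg n s) h2 (comp_pos (Cmat_nonneg n s) h3 h4))
  rwa [hlen] at hc

lemma Cmat_edge (n s : ℕ) {k j : Fin n} (h : Cmat n s k j ≠ 0) :
    ((k : ℕ) + 1 < n ∧ (j : ℕ) = (k : ℕ) + 1) ∨
      (¬((k : ℕ) + 1 < n) ∧ ((j : ℕ) = 0 ∨ s ≤ (j : ℕ))) := by
  unfold Cmat at h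
  split_ifs at h with h1 h2 h2
  · exact Or.inl ⟨h1, h2⟩
  · exact absurd rfl h
  · exact Or.inr ⟨h1, h2⟩
  · exact absurd rfl h

lemma Cmat_invar (n s : ℕ) (hn : 3 ≤ n) (hs1 : 1 ≤ s) :
    ∀ (m : ℕ) (j : Fin n), (Cmat n s ^ m) (⟨0, by omega⟩ : Fin n) j ≠ 0 →
      (j : ℕ) ≤ m ∧ ((j : ℕ) < s → m = (j : ℕ) ∨ n + (j : ℕ) ≤ m) := by
  intro m
  induction m with
  | zero =>
    intro j h
    rw [pow_zero, Matrix.one_apply] at h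
    rcases eq_or_ne (⟨0, (by omega : 0 < n)⟩ : Fin n) j with he | he
    · have hj0 : (j : ℕ) = 0 := by rw [← he]
      exact ⟨by omega, fun _ => Or.inl (by omega)⟩
    · rw [if_neg he] at h; exact absurd rfl h
  | succ m ih =>
    intro j h
    rw [pow_succ, Matrix.mul_apply] at h
    obtain ⟨k, -, hk⟩ := Finset.exists_ne_zero_of_sum_ne_zero h
    have h1 : (Cmat n s ^ m) (⟨0, by omega⟩ : Fin n) k ≠ 0 := left_ne_zero_of_mul hk
    have h2 : Cmat n s k j ≠ 0 := right_ne_zero_of_mul hk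
    have hik := ih k h1
    have hedge := Cmat_edge n s h2
    have hk' := k.isLt
    have hj' := j.isLt
    omega

theorem stmt5 {n : ℕ} (hn : 3 ≤ n) (t : ℕ) (ht1 : n ≤ t) (ht2 : t ≤ 2 * (n - 1)) :
    ∃ A : Matrix (Fin n) (Fin n) ℝ, IsCompanion A ∧ _root_.IsPrimitive A ∧ matExp A = t := by
  set s := t + 1 - n with hsdef
  have hs1 : 1 ≤ s := by omega
  have hs2 : s ≤ n - 1 := by omega
  have hts : t = n + s - 1 := by omega
  have hpos : ∀ i j, 0 < (Cmat n s ^ t) i j := by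
    rw [hts]
    intro i j
    have hi := i.isLt
    have hj := j.isLt
    by_cases hA : (j : ℕ) + 1 ≤ s + (i : ℕ)
    · exact Cmat_reach n s hn hs1 hs2 i j 0 (s + (i : ℕ) - ((j : ℕ) + 1))
        (by omega) (by omega) (Or.inl rfl) (by omega)
    · by_cases hB : (j : ℕ) + 1 ≤ 2 * s + (i : ℕ)
      · exact Cmat_reach n s hn hs1 hs2 i j s (2 * s + (i : ℕ) - ((j : ℕ) + 1))
          (by omega) (by omega) (Or.inr le_rfl) (by omega)
      · exact Cmat_reach n s hn hs1 hs2 i j ((j : ℕ) + 1 - s - (i : ℕ)) 0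
          (by omega) (by omega) (Or.inr (by omega)) (by omega)
  have tmem : t ∈ {m : ℕ | 0 < m ∧ ∀ i j, 0 < (Cmat n s ^ m) i j} := ⟨by omega, hpos⟩
  refine ⟨Cmat n s, ⟨?_, ?_⟩, ⟨t, by omega, hpos⟩, ?_⟩
  · intro i j; unfold Cmat; split_ifs <;> norm_num
  · intro i j hij
    unfold Cmat
    rw [if_pos hij]
    split_ifs with h <;> simp [h]
  · unfold matExp
    refine le_antisymm (Nat.sInf_le tmem) (le_csInf ⟨t, tmem⟩ ?_)
    rintro m ⟨hm0, hmpos⟩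
    by_contra hlt
    push_neg at hlt
    rcases lt_or_ge m n with hmn | hmn
    · have hz := Cmat_invar n s hn hs1 m ⟨0, by omega⟩ (ne_of_gt (hmpos _ _))
      have hv : ((⟨0, (by omega : 0 < n)⟩ : Fin n) : ℕ) = 0 := rfl
      rw [hv] at hz
      omega
    · have hz := Cmat_invar n s hn hs1 m ⟨s - 1, by omega⟩ (ne_of_gt (hmpos _ _))
      have hv : ((⟨s - 1, (by omega : s - 1 < n)⟩ : Fin n) : ℕ) = s - 1 := rfl
      rw [hv] at hz
      omega
end

section
/- Let n ≥ 3 and let A be a primitive (0,1) companion matrix of order n whose adjacency digraph D(A) contains exactly two elementary cycles, of lengths n and s (so gcd(n,s) = 1, s < n). Then exp(A) = n + s(n-2). -/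
open Matrix BigOperators

/- ===================== auxiliary material ===================== -/

/-- Walk-length characterization predicate. -/
def myP (n s i j m : ℕ) : Prop :=
  m + i = j ∨ (∃ a b : ℕ, m + i = j + n + a * n + b * s) ∨
    (n - s ≤ j ∧ ∃ a b : ℕ, m + i = j + s + a * n + b * s)

lemma sumPosIff {α : Type*} [Fintype α] (f : α → ℝ) (h : ∀ a, 0 ≤ f a) :
    (0 < ∑ a, f a) ↔ ∃ a, 0 < f a := by
  constructor
  · intro hpos
    by_contra hc
    push_neg at hc
    have hz : ∀ a ∈ Finset.univ, f a = 0 := fun a _ => le_antisymm (hc a) (h a)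
    rw [Finset.sum_eq_zero hz] at hpos
    exact lt_irrefl 0 hpos
  · rintro ⟨a, ha⟩
    exact Finset.sum_pos' (fun b _ => h b) ⟨a, Finset.mem_univ a, ha⟩

lemma entry01_nonneg {n : ℕ} {A : Matrix (Fin n) (Fin n) ℝ}
    (h01 : ∀ i j, A i j = 0 ∨ A i j = 1) (i j : Fin n) : 0 ≤ A i j := by
  rcases h01 i j with h | h <;> rw [h] <;> norm_num

lemma powNonneg {n : ℕ} (A : Matrix (Fin n) (Fin n) ℝ)
    (h01 : ∀ i j, A i j = 0 ∨ A i j = 1) :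
    ∀ m (i j : Fin n), 0 ≤ (A ^ m) i j := by
  intro m
  induction m with
  | zero =>
    intro i j
    rw [pow_zero, Matrix.one_apply]
    split <;> norm_num
  | succ m ih =>
    intro i j
    rw [pow_succ', Matrix.mul_apply]
    exact Finset.sum_nonneg fun k _ => mul_nonneg (entry01_nonneg h01 i k) (ih k j)

lemma myP_zero {n s i j : ℕ} (hsn : s < n) (hi : i < n) : myP n s i j 0 ↔ i = j := by
  constructor
  · rintro (h | ⟨a, b, h⟩ | ⟨h2, a, b, h⟩)
    · omega
    · omega
    · omega
  · rintro rfl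
    left; omega

lemma myP_stepMid {n s i j m : ℕ} : myP n s (i + 1) j m ↔ myP n s i j (m + 1) := by
  constructor
  · rintro (h | ⟨a, b, h⟩ | ⟨h2, a, b, h⟩)
    · left; omega
    · right; left; exact ⟨a, b, by omega⟩
    · right; right; exact ⟨h2, a, b, by omega⟩
  · rintro (h | ⟨a, b, h⟩ | ⟨h2, a, b, h⟩)
    · left; omega
    · right; left; exact ⟨a, b, by omega⟩
    · right; right; exact ⟨h2, a, b, by omega⟩

lemma myP_stepLast {n s j m : ℕ} (hn : 3 ≤ n) (hs : 0 < s) (hsn : s < n) (hj : j < n) :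
    myP n s (n - 1) j (m + 1) ↔ (myP n s 0 j m ∨ myP n s (n - s) j m) := by
  constructor
  · rintro (h | ⟨a, b, h⟩ | ⟨h2, a, b, h⟩)
    · exact absurd h (by omega)
    · rcases a with _ | a'
      · rcases b with _ | b'
        · left; left; omega
        · right; right; left
          exact ⟨0, b', by have e : (b' + 1) * s = b' * s + s := (by ring); omega⟩
      · left; right; left
        exact ⟨a', b, by have e : (a' + 1) * n = a' * n + n := (by ring); omega⟩
    · rcases a with _ | a'
      · rcases b with _ | b'
        · right; left; omega
        · right; right; right
          exact ⟨h2, 0, b', by have e : (b' + 1) * s = b' * s + s := (by ring); omega⟩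
      · left; right; right
        exact ⟨h2, a', b, by have e : (a' + 1) * n = a' * n + n := (by ring); omega⟩
  · rintro ((h | ⟨a, b, h⟩ | ⟨h2, a, b, h⟩) | (h | ⟨a, b, h⟩ | ⟨h2, a, b, h⟩))
    · right; left; exact ⟨0, 0, by omega⟩
    · right; left
      exact ⟨a + 1, b, by have e : (a + 1) * n = a * n + n := (by ring); omega⟩
    · right; right
      exact ⟨h2, a + 1, b, by have e : (a + 1) * n = a * n + n := (by ring); omega⟩
    · right; right
      exact ⟨by omega, 0, 0, by omega⟩
    · right; left
      exact ⟨a, b + 1, by have e : (b + 1) * s = b * s + s := (by ring); omega⟩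
    · right; right
      exact ⟨h2, a, b + 1, by have e : (b + 1) * s = b * s + s := (by ring); omega⟩

/-- The walk-length characterization of positivity of matrix powers. -/
lemma charPow {n s : ℕ} (hn : 3 ≤ n) (hs : 0 < s) (hsn : s < n)
    (A : Matrix (Fin n) (Fin n) ℝ) (hA : IsCompanion A)
    (h0 : A ⟨n - 1, by omega⟩ ⟨0, by omega⟩ = 1)
    (hns : A ⟨n - 1, by omega⟩ ⟨n - s, by omega⟩ = 1)
    (hout : ∀ j : Fin n, A ⟨n - 1, by omega⟩ j = 1 → (j : ℕ) = 0 ∨ (j : ℕ) = n - s) :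
    ∀ m (i j : Fin n), 0 < (A ^ m) i j ↔ myP n s (i : ℕ) (j : ℕ) m := by
  intro m
  induction m with
  | zero =>
    intro i j
    rw [pow_zero, Matrix.one_apply]
    constructor
    · intro h
      rcases eq_or_ne i j with rfl | hne
      · exact (myP_zero hsn i.isLt).mpr rfl
      · rw [if_neg hne] at h
        exact absurd h (lt_irrefl 0)
    · intro h
      have h2 : i = j := Fin.ext ((myP_zero hsn i.isLt).mp h)
      rw [if_pos h2]; norm_num
  | succ m ih =>
    intro i j
    have hn0p : 0 < n := by omega
    have hnsp : n - s < n := by omega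
    have hn1p : n - 1 < n := by omega
    rw [pow_succ', Matrix.mul_apply]
    have hnn : ∀ k, 0 ≤ A i k * (A ^ m) k j :=
      fun k => mul_nonneg (entry01_nonneg hA.1 i k) (powNonneg A hA.1 m k j)
    refine Iff.trans (sumPosIff _ hnn) ?_
    by_cases hi : (i : ℕ) + 1 < n
    · have heq : (∃ k, 0 < A i k * (A ^ m) k j) ↔ 0 < (A ^ m) ⟨(i : ℕ) + 1, hi⟩ j := by
        constructor
        · rintro ⟨k, hk⟩
          have hAik : A i k ≠ 0 := by
            intro h
            rw [h, zero_mul] at hk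
            exact lt_irrefl 0 hk
          have hAik1 : A i k = 1 := (hA.1 i k).resolve_left hAik
          have hkv : k = ⟨(i : ℕ) + 1, hi⟩ := Fin.ext ((hA.2 i k hi).mp hAik1)
          rw [hkv] at hAik1 hk
          rw [hAik1, one_mul] at hk
          exact hk
        · intro h
          refine ⟨⟨(i : ℕ) + 1, hi⟩, ?_⟩
          rw [(hA.2 i _ hi).mpr rfl, one_mul]
          exact h
      rw [heq, ih]
      exact myP_stepMid
    · have hi' : (i : ℕ) = n - 1 := by have := i.isLt; omega
      have hieq : i = ⟨n - 1, hn1p⟩ := Fin.ext hi'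
      have heq2 : (∃ k, 0 < A i k * (A ^ m) k j) ↔
          (0 < (A ^ m) (⟨0, hn0p⟩ : Fin n) j ∨ 0 < (A ^ m) (⟨n - s, hnsp⟩ : Fin n) j) := by
        constructor
        · rintro ⟨k, hk⟩
          have hAik : A i k ≠ 0 := by
            intro h
            rw [h, zero_mul] at hk
            exact lt_irrefl 0 hk
          have hAik1 : A i k = 1 := (hA.1 i k).resolve_left hAik
          rcases hout k (by rw [← hieq]; exact hAik1) with h | h
          · left
            have hkv : k = (⟨0, hn0p⟩ : Fin n) := Fin.ext h
            rw [hkv] at hAik1 hk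
            rw [hAik1, one_mul] at hk
            exact hk
          · right
            have hkv : k = (⟨n - s, hnsp⟩ : Fin n) := Fin.ext h
            rw [hkv] at hAik1 hk
            rw [hAik1, one_mul] at hk
            exact hk
        · rintro (h | h)
          · exact ⟨⟨0, hn0p⟩, by rw [hieq, h0, one_mul]; exact h⟩
          · exact ⟨⟨n - s, hnsp⟩, by rw [hieq, hns, one_mul]; exact h⟩
      rw [heq2, ih, ih, hi']
      exact (myP_stepLast hn hs hsn j.isLt).symm

/-- Any elementary cycle of length `k ≤ n` yields the edge `n-1 → n-k`. -/
lemma cycle_edge {n : ℕ} (A : Matrix (Fin n) (Fin n) ℝ) (hA : IsCompanion A)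
    {k : ℕ} (hk : HasElemCycle A k) (hkn : k ≤ n) :
    A ⟨n - 1, by rcases hk with ⟨h, -⟩; omega⟩ ⟨n - k, by rcases hk with ⟨h, -⟩; omega⟩ = 1 := by
  obtain ⟨hk0, c, hcc, hinj, hedge⟩ := hk
  have hn0 : 0 < n := lt_of_lt_of_le hk0 hkn
  have hex : ∃ i0, i0 < k ∧ (c i0 : ℕ) = n - 1 := by
    by_contra hno
    push_neg at hno
    have key : ∀ t, t ≤ k → (c t : ℕ) = (c 0 : ℕ) + t := by
      intro t
      induction t with
      | zero => intro _; simp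
      | succ t ihh =>
        intro ht
        have h1 := ihh (by omega)
        have h2 : (c t : ℕ) ≠ n - 1 := hno t (by omega)
        have h3 : (c t : ℕ) + 1 < n := by have := (c t).isLt; omega
        have h4 := (hA.2 (c t) (c (t + 1)) h3).mp (hedge t (by omega))
        omega
    have hck := key k le_rfl
    rw [hcc] at hck
    omega
  obtain ⟨i0, hi0k, hi0⟩ := hex
  have claimA : ∀ t, t ≤ i0 → (c t : ℕ) = (c 0 : ℕ) + t := by
    intro t
    induction t with
    | zero => intro _; simp
    | succ t ihh =>
      intro ht
      have h1 := ihh (by omega)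
      have hne : (c t : ℕ) ≠ n - 1 := by
        intro hv
        have he : c t = c i0 := Fin.ext (by rw [hv, hi0])
        have := hinj t i0 (by omega) hi0k he
        omega
      have h3 : (c t : ℕ) + 1 < n := by have := (c t).isLt; omega
      have h4 := (hA.2 (c t) (c (t + 1)) h3).mp (hedge t (by omega))
      omega
  have claimB : ∀ t, i0 + 1 + t ≤ k → (c (i0 + 1 + t) : ℕ) = (c (i0 + 1) : ℕ) + t := by
    intro t
    induction t with
    | zero => intro _; simp
    | succ t ihh =>
      intro ht
      have h1 := ihh (by omega)
      have hp : i0 + 1 + t < k := by omega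
      have hne : (c (i0 + 1 + t) : ℕ) ≠ n - 1 := by
        intro hv
        have he : c (i0 + 1 + t) = c i0 := Fin.ext (by rw [hv, hi0])
        have := hinj _ _ hp hi0k he
        omega
      have h3 : (c (i0 + 1 + t) : ℕ) + 1 < n := by have := (c (i0 + 1 + t)).isLt; omega
      have h4 := (hA.2 (c (i0 + 1 + t)) (c (i0 + 1 + t + 1)) h3).mp (hedge _ hp)
      have h5 : i0 + 1 + (t + 1) = i0 + 1 + t + 1 := by omega
      rw [h5]
      omega
  have hca := claimA i0 le_rfl
  have hcb := claimB (k - (i0 + 1)) (by omega)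
  rw [show i0 + 1 + (k - (i0 + 1)) = k from by omega, hcc] at hcb
  have hv1 : c i0 = (⟨n - 1, by omega⟩ : Fin n) :=
    Fin.ext (show (c i0 : ℕ) = n - 1 from hi0)
  have hv2 : c (i0 + 1) = (⟨n - k, by omega⟩ : Fin n) :=
    Fin.ext (show (c (i0 + 1) : ℕ) = n - k from by omega)
  have := hedge i0 hi0k
  rw [hv1, hv2] at this
  exact this

/-- helper path function for building elementary cycles from a back edge -/
def pathFun (n jv : ℕ) (hj : jv < n) : ℕ → Fin n :=
  fun t => if h : jv + t < n then ⟨jv + t, h⟩ else ⟨jv, hj⟩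

lemma pathFun_lt {n jv t : ℕ} (hj : jv < n) (h : jv + t < n) :
    pathFun n jv hj t = ⟨jv + t, h⟩ := dif_pos h

lemma pathFun_ge {n jv t : ℕ} (hj : jv < n) (h : ¬ jv + t < n) :
    pathFun n jv hj t = ⟨jv, hj⟩ := dif_neg h

lemma out_edges {n s : ℕ} (hn : 3 ≤ n) (hs : 0 < s) (hsn : s < n)
    (A : Matrix (Fin n) (Fin n) ℝ) (hA : IsCompanion A)
    (honly : ∀ k, HasElemCycle A k → k = n ∨ k = s) :
    ∀ j : Fin n, A ⟨n - 1, by omega⟩ j = 1 → (j : ℕ) = 0 ∨ (j : ℕ) = n - s := by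
  intro j hj1
  have hjlt := j.isLt
  have hcyc : HasElemCycle A (n - (j : ℕ)) := by
    refine ⟨by omega, pathFun n (j : ℕ) hjlt, ?_, ?_, ?_⟩
    · rw [pathFun_ge hjlt (by omega), pathFun_lt hjlt (by omega)]
      exact Fin.ext (by simp)
    · intro a b ha hb hab
      have hva : (pathFun n (j : ℕ) hjlt a : ℕ) = (j : ℕ) + a := by
        rw [pathFun_lt hjlt (show (j : ℕ) + a < n from by omega)]
      have hvb : (pathFun n (j : ℕ) hjlt b : ℕ) = (j : ℕ) + b := by
        rw [pathFun_lt hjlt (show (j : ℕ) + b < n from by omega)]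
      have h3 := congrArg Fin.val hab
      rw [hva, hvb] at h3
      omega
    · intro t ht
      by_cases h2 : t + 1 < n - (j : ℕ)
      · rw [pathFun_lt hjlt (show (j : ℕ) + t < n from by omega),
          pathFun_lt hjlt (show (j : ℕ) + (t + 1) < n from by omega)]
        exact (hA.2 _ _ (by simp; omega)).mpr (by simp; omega)
      · have h3 : t + 1 = n - (j : ℕ) := by omega
        rw [pathFun_lt hjlt (show (j : ℕ) + t < n from by omega),
          pathFun_ge hjlt (by omega)]
        have he1 : (⟨(j : ℕ) + t, by omega⟩ : Fin n) = ⟨n - 1, by omega⟩ :=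
          Fin.ext (by simp; omega)
        have he2 : (⟨(j : ℕ), hjlt⟩ : Fin n) = j := Fin.ext (by simp)
        rw [he1, he2]
        exact hj1
  rcases honly _ hcyc with h | h
  · left; omega
  · right; omega

/-- upper bound: the claimed exponent works for every pair. -/
lemma myP_upper {n s : ℕ} (hn : 3 ≤ n) (hs : 0 < s) (hsn : s < n) (hco : Nat.Coprime n s)
    (i j : ℕ) (hi : i < n) (hj : j < n) : myP n s i j (n + s * (n - 2)) := by
  haveI : NeZero s := ⟨hs.ne'⟩
  set z : ZMod s := ((i : ZMod s) - (j : ZMod s)) * ((n : ZMod s))⁻¹ with hz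
  set u := z.val with huv
  have hu : u < s := ZMod.val_lt z
  have hu2 : ((u : ℕ) : ZMod s) = z := (ZMod.natCast_val z).trans (ZMod.cast_id _ _)
  have h1 : ((u * n + j : ℕ) : ZMod s) = ((i : ℕ) : ZMod s) := by
    push_cast
    rw [hu2, hz, mul_assoc, mul_comm ((n : ZMod s))⁻¹ (n : ZMod s),
      ZMod.coe_mul_inv_eq_one n hco, mul_one, sub_add_cancel]
  have hcong : (u * n + j) ≡ i [MOD s] := (ZMod.natCast_eq_natCast_iff _ _ _).mp h1
  by_cases hcase : u * n + j ≤ s * (n - 2) + i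
  · have hmod2 : (u * n + j) ≡ (s * (n - 2) + i) [MOD s] := by
      have hz2 : s * (n - 2) ≡ 0 [MOD s] := (Nat.modEq_zero_iff_dvd).mpr (dvd_mul_right s _)
      have h3 := Nat.ModEq.add_right i hz2
      rw [zero_add] at h3
      exact hcong.trans h3.symm
    have hdvd : s ∣ (s * (n - 2) + i) - (u * n + j) := (Nat.modEq_iff_dvd' hcase).mp hmod2
    obtain ⟨b, hb⟩ := hdvd
    right; left
    refine ⟨u, b, ?_⟩
    have e : b * s = s * b := mul_comm _ _
    omega
  · push_neg at hcase
    have hei : i ≤ u * n + j := by omega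
    have hdvd : s ∣ (u * n + j) - i := (Nat.modEq_iff_dvd' hei).mp hcong.symm
    obtain ⟨q, hq⟩ := hdvd
    have hbound1 : u * n ≤ (s - 1) * n := Nat.mul_le_mul_right n (by omega)
    have hsn3 : s * n = (s - 1) * n + n := by
      conv_lhs => rw [show s = s - 1 + 1 from by omega]
      rw [add_mul, one_mul]
    have hlt : (u * n + j) - i < s * n := by omega
    have hgt : s * (n - 2) < (u * n + j) - i := by omega
    have hq1 : n - 2 < q := by
      have h5 : s * (n - 2) < s * q := by omega
      exact lt_of_mul_lt_mul_left h5 (Nat.zero_le s)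
    have hq2 : q < n := by
      have h5 : s * q < s * n := by omega
      exact lt_of_mul_lt_mul_left h5 (Nat.zero_le s)
    have hqv : q = n - 1 := by omega
    rw [hqv] at hq
    have hsq : s * (n - 1) = s * (n - 2) + s := by
      conv_lhs => rw [show n - 1 = n - 2 + 1 from by omega]
      rw [mul_add, mul_one]
    have hsn2 : s * n = s * (n - 1) + s := by
      conv_lhs => rw [show n = n - 1 + 1 from by omega]
      rw [mul_add, mul_one]
    have hu' : u = s - 1 := by
      rcases Nat.lt_or_ge u (s - 1) with h | h
      · exfalso
        have hs2 : 2 ≤ s := by omega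
        have hm1 : u * n ≤ (s - 2) * n := Nat.mul_le_mul_right n (by omega)
        have hm4 : (s - 2) * n + n + n = s * n := by
          have : (s - 2) + 1 + 1 = s := by omega
          calc (s - 2) * n + n + n = ((s - 2) + 1 + 1) * n := by ring
            _ = s * n := by rw [this]
        omega
      · omega
    have hjv : j = (n - s) + i := by
      rw [hu'] at hq
      omega
    right; right
    refine ⟨by omega, 0, n - 2, ?_⟩
    have e1 : (n - 2) * s = s * (n - 2) := mul_comm _ _
    omega

/-- lower bound witness: the pair `(0, n-s-1)` fails one step earlier. -/
lemma myP_bad {n s : ℕ} (hn : 3 ≤ n) (hs : 0 < s) (hsn : s < n) (hco : Nat.Coprime n s) :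
    ¬ myP n s 0 (n - s - 1) (n + s * (n - 2) - 1) := by
  have hp1 : 1 ≤ s * (n - 2) := Nat.mul_pos hs (by omega)
  rintro (h | ⟨a, b, h⟩ | ⟨h2, -⟩)
  · omega
  · have hsq : s * (n - 1) = s * (n - 2) + s := by
      conv_lhs => rw [show n - 1 = n - 2 + 1 from by omega]
      rw [mul_add, mul_one]
    have e : (a + 1) * n = a * n + n := by ring
    have hkey : s * (n - 1) = (a + 1) * n + b * s := by omega
    have hdvd : s ∣ (a + 1) * n := by
      have hle2 : b * s ≤ s * (n - 1) := by omega
      have h2 : (a + 1) * n = s * (n - 1) - b * s := by omega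
      rw [h2]
      exact Nat.dvd_sub (dvd_mul_right s _) (dvd_mul_left s b)
    have hdvd2 : s ∣ (a + 1) := (Nat.Coprime.dvd_of_dvd_mul_right hco.symm hdvd)
    have hle : s ≤ a + 1 := Nat.le_of_dvd (by omega) hdvd2
    have hmul : s * n ≤ (a + 1) * n := Nat.mul_le_mul_right n hle
    have hsn2 : s * n = s * (n - 1) + s := by
      conv_lhs => rw [show n = n - 1 + 1 from by omega]
      rw [mul_add, mul_one]
    omega
  · omega

/-- monotonicity of the all-pairs condition from row 0. -/
lemma myP_mono {n s : ℕ} (hn : 3 ≤ n) (hs : 0 < s) (hsn : s < n) (m : ℕ)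
    (h : ∀ j', j' < n → myP n s 0 j' m) :
    ∀ j, j < n → myP n s 0 j (m + 1) := by
  intro j hj
  rcases Nat.eq_zero_or_pos j with rfl | hj0
  · have hh := h (n - 1) (by omega)
    rcases hh with h1 | ⟨a, b, h1⟩ | ⟨h2, a, b, h1⟩
    · right; left; exact ⟨0, 0, by omega⟩
    · right; left
      exact ⟨a + 1, b, by have e : (a + 1) * n = a * n + n := (by ring); omega⟩
    · right; left
      exact ⟨a, b + 1, by have e : (b + 1) * s = b * s + s := (by ring); omega⟩
  · have hh := h (j - 1) (by omega)
    rcases hh with h1 | ⟨a, b, h1⟩ | ⟨h2, a, b, h1⟩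
    · left; omega
    · right; left; exact ⟨a, b, by omega⟩
    · right; right; exact ⟨by omega, a, b, by omega⟩

theorem stmt8 {n s : ℕ} (hn : 3 ≤ n) (hs : 0 < s) (hsn : s < n)
    (A : Matrix (Fin n) (Fin n) ℝ) (hA : IsCompanion A) (hP : _root_.IsPrimitive A)
    (hcn : HasElemCycle A n) (hcs : HasElemCycle A s)
    (honly : ∀ k, HasElemCycle A k → k = n ∨ k = s) :
    matExp A = n + s * (n - 2) := by
  -- structure of A
  have h0 : A ⟨n - 1, by omega⟩ ⟨0, by omega⟩ = 1 := by
    have h := cycle_edge A hA hcn le_rfl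
    have he : (⟨n - n, by rcases hcn with ⟨h', -⟩; omega⟩ : Fin n) = ⟨0, by omega⟩ :=
      Fin.ext (by simp)
    rw [he] at h
    exact h
  have hns : A ⟨n - 1, by omega⟩ ⟨n - s, by omega⟩ = 1 := cycle_edge A hA hcs hsn.le
  have hout := out_edges hn hs hsn A hA honly
  have hchar := charPow hn hs hsn A hA h0 hns hout
  -- coprimality from primitivity
  obtain ⟨m0, hm00, hm0pos⟩ := hP
  have p00 : myP n s 0 0 m0 := by
    have := (hchar m0 ⟨0, by omega⟩ ⟨0, by omega⟩).mp (hm0pos _ _)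
    simpa using this
  have p01 : myP n s 0 1 m0 := by
    have := (hchar m0 ⟨0, by omega⟩ ⟨1, by omega⟩).mp (hm0pos _ _)
    simpa using this
  have hco : Nat.Coprime n s := by
    rcases p00 with h | ⟨a, b, h⟩ | ⟨h3, -⟩
    · omega
    · set d := Nat.gcd n s with hd
      have hdn : d ∣ n := Nat.gcd_dvd_left n s
      have hds : d ∣ s := Nat.gcd_dvd_right n s
      have hdm : d ∣ m0 := by
        rw [show m0 = n + a * n + b * s from by omega]
        exact dvd_add (dvd_add hdn (hdn.mul_left a)) (hds.mul_left b)
      have hdm1 : d ∣ m0 - 1 := by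
        rcases p01 with h' | ⟨a', b', h'⟩ | ⟨h3', a', b', h'⟩
        · rw [show m0 - 1 = 0 from by omega]; exact dvd_zero d
        · rw [show m0 - 1 = n + a' * n + b' * s from by omega]
          exact dvd_add (dvd_add hdn (hdn.mul_left a')) (hds.mul_left b')
        · rw [show m0 - 1 = s + a' * n + b' * s from by omega]
          exact dvd_add (dvd_add hds (hdn.mul_left a')) (hds.mul_left b')
      have hd1 : d ∣ 1 := by
        have := Nat.dvd_sub hdm hdm1
        rwa [show m0 - (m0 - 1) = 1 from by omega] at this
      exact Nat.dvd_one.mp hd1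
    · omega
  -- the target value
  set M := n + s * (n - 2) with hM
  have hp1 : 1 ≤ s * (n - 2) := Nat.mul_pos hs (by omega)
  have hM0 : 0 < M := by omega
  have hMall : ∀ i j : Fin n, 0 < (A ^ M) i j := fun i j =>
    (hchar M i j).mpr (myP_upper hn hs hsn hco (i : ℕ) (j : ℕ) i.isLt j.isLt)
  unfold matExp
  apply le_antisymm
  · exact Nat.sInf_le ⟨hM0, hMall⟩
  · refine le_csInf ⟨M, hM0, hMall⟩ ?_
    rintro m ⟨hm0, hmall⟩
    by_contra hlt
    push_neg at hlt
    have hQ : ∀ j', j' < n → myP n s 0 j' m := by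
      intro j' hj'
      have := (hchar m ⟨0, by omega⟩ ⟨j', hj'⟩).mp (hmall _ _)
      simpa using this
    have hQstep : ∀ t, ∀ j', j' < n → myP n s 0 j' (m + t) := by
      intro t
      induction t with
      | zero => exact hQ
      | succ t ih => exact myP_mono hn hs hsn (m + t) ih
    have hQM : myP n s 0 (n - s - 1) (M - 1) := by
      have := hQstep (M - 1 - m) (n - s - 1) (by omega)
      rwa [show m + (M - 1 - m) = M - 1 from by omega] at this
    exact myP_bad hn hs hsn hco hQM
end

section
/- Let a_0 ≥ 2, d ≥ 1, s ≥ 1 with gcd(a_0, d) = 1, and set a_j = a_0 + j·d for j = 0,...,s. Then the Frobenius number satisfies F(a_0, a_1, ..., a_s) = (⌊(a_0-2)/s⌋ + 1)·a_0 + (d-1)(a_0-1). -/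
open Matrix BigOperators

lemma mem_closure_iff_rep (a0 d s : ℕ) (m : ℕ) :
    m ∈ AddSubmonoid.closure {a : ℕ | ∃ j ≤ s, a = a0 + j * d} ↔
      ∃ x y : ℕ, y ≤ s * x ∧ m = x * a0 + y * d := by
  constructor
  · intro hm
    induction hm using AddSubmonoid.closure_induction with
    | mem a ha =>
      obtain ⟨j, hj, rfl⟩ := ha
      exact ⟨1, j, by simpa using hj, by ring⟩
    | zero => exact ⟨0, 0, by simp, by simp⟩
    | add x y hx hy ihx ihy =>
      obtain ⟨x1, y1, h1, rfl⟩ := ihx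
      obtain ⟨x2, y2, h2, rfl⟩ := ihy
      exact ⟨x1 + x2, y1 + y2, by nlinarith, by ring⟩
  · rintro ⟨x, y, hxy, rfl⟩
    induction x generalizing y with
    | zero =>
      have hy0 : y = 0 := by simpa using hxy
      subst hy0
      simpa using AddSubmonoid.zero_mem _
    | succ x ih =>
      have key : (x + 1) * a0 + y * d =
          (x * a0 + (y - min y s) * d) + (a0 + (min y s) * d) := by
        have : y - min y s + min y s = y := Nat.sub_add_cancel (min_le_left _ _)
        nlinarith [Nat.sub_add_cancel (min_le_left y s)]
      rw [key]
      refine AddSubmonoid.add_mem _ (ih _ ?_) (AddSubmonoid.subset_closure ⟨min y s, min_le_right _ _, rfl⟩)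
      rcases le_or_gt y s with hy | hy
      · simp [min_eq_left hy]
      · have : min y s = s := min_eq_right hy.le
        rw [this]
        rw [Nat.mul_succ] at hxy
        omega

lemma not_rep (a0 d s : ℕ) (ha : 2 ≤ a0) (hd : 1 ≤ d) (hs : 1 ≤ s)
    (h : Nat.Coprime a0 d) :
    ¬ ∃ x y : ℕ, y ≤ s * x ∧
      ((a0 - 2) / s) * a0 + (a0 - 1) * d = x * a0 + y * d := by
  rintro ⟨x, y, hxy, heq⟩
  set q := (a0 - 2) / s with hqdef
  have hq : s * q ≤ a0 - 2 := by rw [mul_comm]; exact Nat.div_mul_le_self _ _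
  have heqZ : (q : ℤ) * a0 + ((a0 : ℤ) - 1) * d = x * a0 + y * d := by
    have := heq
    zify [show 1 ≤ a0 by omega] at this
    linarith [this]
  have h1 : ((y : ℤ) - ((a0 : ℤ) - 1)) * d = ((q : ℤ) - x) * a0 := by
    linear_combination -heqZ
  have hcop : IsCoprime (a0 : ℤ) (d : ℤ) := Int.isCoprime_iff_gcd_eq_one.mpr (by
    simpa using h)
  have hdvd : (a0 : ℤ) ∣ ((y : ℤ) - ((a0 : ℤ) - 1)) :=
    hcop.dvd_of_dvd_mul_right ⟨(q : ℤ) - x, by linear_combination h1⟩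
  obtain ⟨t, ht⟩ := hdvd
  have ha0Z : (2 : ℤ) ≤ a0 := by exact_mod_cast ha
  have ht0 : 0 ≤ t := by
    by_contra h'
    push_neg at h'
    have : t ≤ -1 := by omega
    nlinarith [show (0:ℤ) ≤ y from by positivity,
      mul_le_mul_of_nonneg_left this (show (0:ℤ) ≤ a0 by linarith)]
  have hxq : (x : ℤ) = q - t * d := by
    have h2 : ((a0 : ℤ)) * (t * d) = a0 * ((q : ℤ) - x) := by
      rw [ht] at h1; ring_nf; ring_nf at h1; linarith [h1]
    have := mul_left_cancel₀ (show (a0:ℤ) ≠ 0 by linarith) h2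
    linarith
  have hdZ : (1 : ℤ) ≤ d := by exact_mod_cast hd
  have hxle : (x : ℤ) ≤ q := by nlinarith [mul_nonneg ht0 (show (0:ℤ) ≤ d by linarith)]
  have hsx : (s : ℤ) * x ≤ s * q := by
    apply mul_le_mul_of_nonneg_left hxle (by positivity)
  have hxyZ : (y : ℤ) ≤ s * x := by exact_mod_cast hxy
  have hqZ : (s : ℤ) * q ≤ (a0 : ℤ) - 2 := by
    have := hq; zify [show 2 ≤ a0 from ha] at this; linarith
  have hyge : ((a0 : ℤ) - 1) ≤ y := by
    nlinarith [mul_nonneg (show (0:ℤ) ≤ a0 by linarith) ht0]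
  linarith

lemma rep_of_ge (a0 d s : ℕ) (ha : 2 ≤ a0) (hd : 1 ≤ d) (hs : 1 ≤ s)
    (h : Nat.Coprime a0 d) (m : ℕ)
    (hm : ((a0 - 2) / s) * a0 + (a0 - 1) * d + 1 ≤ m) :
    ∃ x y : ℕ, y ≤ s * x ∧ m = x * a0 + y * d := by
  haveI : NeZero a0 := ⟨by omega⟩
  set q := (a0 - 2) / s with hqdef
  set u : (ZMod a0)ˣ := ZMod.unitOfCoprime d h.symm with hu
  set y := ((m : ZMod a0) * (↑u⁻¹ : ZMod a0)).val with hy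
  have hy_lt : y < a0 := ZMod.val_lt _
  have hyd : ((y * d : ℕ) : ZMod a0) = (m : ZMod a0) := by
    push_cast
    rw [hy, ZMod.natCast_rightInverse _]
    have hcoe : (↑u : ZMod a0) = (d : ZMod a0) := ZMod.coe_unitOfCoprime d h.symm
    rw [← hcoe, mul_assoc, ← Units.val_mul, inv_mul_cancel, Units.val_one, mul_one]
  have hyd_le : y * d ≤ m := by
    calc y * d ≤ (a0 - 1) * d := Nat.mul_le_mul_right _ (by omega)
    _ ≤ m := by omega
  have hdvd : a0 ∣ m - y * d := by
    rw [← ZMod.natCast_eq_zero_iff]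
    rw [Nat.cast_sub hyd_le, hyd, sub_self]
  obtain ⟨x, hx⟩ := hdvd
  have hm' : m = x * a0 + y * d := by
    have := Nat.eq_add_of_sub_eq hyd_le hx
    rw [this]; ring
  refine ⟨x, y, ?_, hm'⟩
  -- first show q + 1 ≤ x
  have hxq : q + 1 ≤ x := by
    by_contra hc
    push_neg at hc
    have hc' : x ≤ q := by omega
    have h1 : x * a0 ≤ q * a0 := Nat.mul_le_mul_right _ hc'
    have h2 : y * d ≤ (a0 - 1) * d := Nat.mul_le_mul_right _ (by omega)
    have h3 : m < q * a0 + (a0 - 1) * d + 1 := by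
      calc m = x * a0 + y * d := hm'
      _ ≤ q * a0 + (a0 - 1) * d := Nat.add_le_add h1 h2
      _ < _ := Nat.lt_succ_self _
    exact absurd hm (not_le.mpr h3)
  -- a0 - 1 ≤ s * (q + 1)
  obtain ⟨r, hr, hdm⟩ : ∃ r, r < s ∧ s * q + r = a0 - 2 :=
    ⟨(a0 - 2) % s, Nat.mod_lt _ (by omega), Nat.div_add_mod _ _⟩
  have hsq : a0 - 1 ≤ s * (q + 1) := by
    rw [Nat.mul_add, mul_one]
    omega
  calc y ≤ a0 - 1 := by omega
  _ ≤ s * (q + 1) := hsq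
  _ ≤ s * x := Nat.mul_le_mul_left _ hxq

theorem stmt14 (a0 d s : ℕ) (ha : 2 ≤ a0) (hd : 1 ≤ d) (hs : 1 ≤ s)
    (h : Nat.Coprime a0 d) :
    frobNum {a : ℕ | ∃ j ≤ s, a = a0 + j * d} =
      ((a0 - 2) / s + 1) * a0 + (d - 1) * (a0 - 1) := by
  set q := (a0 - 2) / s with hqdef
  have hident : ((a0 - 2) / s + 1) * a0 + (d - 1) * (a0 - 1)
      = q * a0 + (a0 - 1) * d + 1 := by
    rw [← hqdef]
    obtain ⟨a', rfl⟩ : ∃ a', a0 = a' + 2 := ⟨a0 - 2, by omega⟩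
    obtain ⟨d', rfl⟩ : ∃ d', d = d' + 1 := ⟨d - 1, by omega⟩
    have e1 : a' + 2 - 2 = a' := by omega
    have e2 : d' + 1 - 1 = d' := by omega
    have e3 : a' + 2 - 1 = a' + 1 := by omega
    rw [e2, e3]
    ring
  rw [hident, frobNum]
  have hub : (q * a0 + (a0 - 1) * d + 1) ∈
      {N : ℕ | ∀ m, N ≤ m →
        m ∈ AddSubmonoid.closure {a : ℕ | ∃ j ≤ s, a = a0 + j * d}} :=
    fun m hm => (mem_closure_iff_rep a0 d s m).mpr (rep_of_ge a0 d s ha hd hs h m hm)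
  refine le_antisymm (Nat.sInf_le hub) (le_csInf ⟨_, hub⟩ ?_)
  intro N hN
  by_contra hlt
  push_neg at hlt
  have hN' : N ≤ q * a0 + (a0 - 1) * d := by omega
  have hrep := (mem_closure_iff_rep a0 d s _).mp (hN _ hN')
  exact not_rep a0 d s ha hd hs h hrep
end

section
/- Let n ≥ 3 and let p_1, ..., p_r be the distinct prime factors of n. The number of irreducible but imprimitive (0,1) companion matrices of order n equals the inclusion-exclusion sum Σ_{k=1}^{r} (-1)^{k+1} Σ_{1 ≤ i_1 < ... < i_k ≤ r} 2^{n/(p_{i_1}···p_{i_k}) - 1}. -/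
open Matrix BigOperators

lemma mul_mem_addsub (M : AddSubmonoid ℕ) {m : ℕ} (k : ℕ) (hm : m ∈ M) : k * m ∈ M := by
  simpa [smul_eq_mul] using M.nsmul_mem hm k

lemma exists_bezout {ι : Type*} [DecidableEq ι] (L : Finset ι) (f : ι → ℕ)
    (M : AddSubmonoid ℕ) (h : ∀ c ∈ L, f c ∈ M) :
    ∃ a b : ℕ, a ∈ M ∧ b ∈ M ∧ (a : ℤ) - b = L.gcd f := by
  induction L using Finset.induction_on with
  | empty => exact ⟨0, 0, M.zero_mem, M.zero_mem, by simp⟩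
  | insert c L hc ih =>
      obtain ⟨a, b, ha, hb, hab⟩ := ih fun x hx => h x (Finset.mem_insert_of_mem hx)
      have hfc : f c ∈ M := h c (Finset.mem_insert_self c L)
      set g := L.gcd f with hg
      set x := Nat.gcdA (f c) g with hxdef
      set y := Nat.gcdB (f c) g with hydef
      have hbez : (Nat.gcd (f c) g : ℤ) = (f c) * x + g * y := Nat.gcd_eq_gcd_ab (f c) g
      have hx : (x.toNat : ℤ) - (-x).toNat = x := Int.toNat_sub_toNat_neg x
      have hy : (y.toNat : ℤ) - (-y).toNat = y := Int.toNat_sub_toNat_neg y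
      refine ⟨x.toNat * f c + y.toNat * a + (-y).toNat * b,
        (-x).toNat * f c + (-y).toNat * a + y.toNat * b, ?_, ?_, ?_⟩
      · exact M.add_mem (M.add_mem (mul_mem_addsub M _ hfc) (mul_mem_addsub M _ ha))
          (mul_mem_addsub M _ hb)
      · exact M.add_mem (M.add_mem (mul_mem_addsub M _ hfc) (mul_mem_addsub M _ ha))
          (mul_mem_addsub M _ hb)
      · rw [Finset.gcd_insert, ← hg]
        push_cast
        linear_combination (f c : ℤ) * hx + ((a : ℤ) - b) * hy + y * hab - hbez

lemma add_one_pump (M : AddSubmonoid ℕ) (b : ℕ) (h1 : b + 1 ∈ M) (h0 : b ∈ M) :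
    ∀ m, b * b ≤ m → m ∈ M := by
  intro m hm
  rcases Nat.eq_zero_or_pos b with hb | hb
  · subst hb
    have h1' : (1 : ℕ) ∈ M := by simpa using h1
    have := mul_mem_addsub M m h1'
    simpa using this
  · set q := m / b with hq
    set r := m % b with hr
    have hrb : r < b := Nat.mod_lt _ hb
    have hbq : b ≤ q := (Nat.le_div_iff_mul_le hb).mpr (by nlinarith)
    have hmeq : m = q * b + r := by rw [mul_comm]; exact (Nat.div_add_mod m b).symm
    have key : m = (q - r) * b + r * (b + 1) := by
      have h2 : r * b ≤ q * b := Nat.mul_le_mul_right _ (le_of_lt (lt_of_lt_of_le hrb hbq))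
      rw [Nat.sub_mul, Nat.mul_add, Nat.mul_one]
      omega
    rw [key]
    exact M.add_mem (mul_mem_addsub M _ h0) (mul_mem_addsub M _ h1)


/-- Companion matrix with last row given by the indicator of `T`. -/
noncomputable def cmat (n : ℕ) (T : Finset (Fin n)) : Matrix (Fin n) (Fin n) ℝ :=
  Matrix.of fun i j =>
    if (i : ℕ) + 1 < n then (if (j : ℕ) = (i : ℕ) + 1 then 1 else 0)
    else (if j ∈ T then 1 else 0)

namespace Cmat

variable {n : ℕ} {T : Finset (Fin n)}

lemma entry01 (i j : Fin n) : cmat n T i j = 0 ∨ cmat n T i j = 1 := by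
  unfold cmat; simp only [Matrix.of_apply]; split_ifs <;> simp

lemma entry_nonneg (i j : Fin n) : 0 ≤ cmat n T i j := by
  rcases entry01 (T := T) i j with h | h <;> rw [h] <;> norm_num

lemma pow_nonneg (k : ℕ) (i j : Fin n) : 0 ≤ ((cmat n T) ^ k) i j := by
  induction k generalizing i j with
  | zero => rw [pow_zero]; by_cases h : i = j <;> simp [Matrix.one_apply, h]
  | succ k ih =>
      rw [pow_succ, Matrix.mul_apply]
      exact Finset.sum_nonneg fun l _ => mul_nonneg (ih i l) (entry_nonneg l j)

lemma edge_succ {i j : Fin n} (h : (i : ℕ) + 1 < n) (hj : (j : ℕ) = (i : ℕ) + 1) :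
    cmat n T i j = 1 := by simp [cmat, h, hj]

lemma edge_last {i j : Fin n} (h : ¬ (i : ℕ) + 1 < n) (hj : j ∈ T) :
    cmat n T i j = 1 := by simp [cmat, h, hj]

lemma edge_cases {i j : Fin n} (h : 0 < cmat n T i j) :
    ((i : ℕ) + 1 < n ∧ (j : ℕ) = (i : ℕ) + 1) ∨ ((i : ℕ) + 1 = n ∧ j ∈ T) := by
  have hi := i.isLt
  unfold cmat at h; simp only [Matrix.of_apply] at h
  split_ifs at h with h1 h2 h3
  · exact Or.inl ⟨h1, h2⟩
  · norm_num at h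
  · exact Or.inr ⟨by omega, h3⟩
  · norm_num at h

lemma walk_zero_iff {i j : Fin n} : 0 < ((cmat n T) ^ 0) i j ↔ i = j := by
  rw [pow_zero]; by_cases h : i = j <;> simp [Matrix.one_apply, h]

lemma walk_succ_iff {k : ℕ} {i j : Fin n} :
    0 < ((cmat n T) ^ (k + 1)) i j ↔ ∃ l, 0 < ((cmat n T) ^ k) i l ∧ 0 < cmat n T l j := by
  rw [pow_succ, Matrix.mul_apply]
  constructor
  · intro h
    by_contra hc
    push_neg at hc
    have : ∀ l ∈ Finset.univ, ((cmat n T) ^ k) i l * cmat n T l j = 0 := by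
      intro l _
      rcases lt_or_eq_of_le (pow_nonneg k i l) with h1 | h1
      · rcases lt_or_eq_of_le (entry_nonneg (T := T) l j) with h2 | h2
        · exact absurd h2 (not_lt.mpr (hc l h1))
        · rw [← h2, mul_zero]
      · rw [← h1, zero_mul]
    rw [Finset.sum_eq_zero this] at h; exact lt_irrefl 0 h
  · rintro ⟨l, h1, h2⟩
    exact Finset.sum_pos' (fun m _ => mul_nonneg (pow_nonneg k i m) (entry_nonneg m j))
      ⟨l, Finset.mem_univ l, mul_pos h1 h2⟩

lemma walk_succ_iff' {k : ℕ} {i j : Fin n} :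
    0 < ((cmat n T) ^ (k + 1)) i j ↔ ∃ l, 0 < cmat n T i l ∧ 0 < ((cmat n T) ^ k) l j := by
  rw [pow_succ', Matrix.mul_apply]
  constructor
  · intro h
    by_contra hc
    push_neg at hc
    have : ∀ l ∈ Finset.univ, cmat n T i l * ((cmat n T) ^ k) l j = 0 := by
      intro l _
      rcases lt_or_eq_of_le (entry_nonneg (T := T) i l) with h1 | h1
      · rcases lt_or_eq_of_le (pow_nonneg k l j) with h2 | h2
        · exact absurd h2 (not_lt.mpr (hc l h1))
        · rw [← h2, mul_zero]
      · rw [← h1, zero_mul]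
    rw [Finset.sum_eq_zero this] at h; exact lt_irrefl 0 h
  · rintro ⟨l, h1, h2⟩
    exact Finset.sum_pos' (fun m _ => mul_nonneg (entry_nonneg i m) (pow_nonneg k m j))
      ⟨l, Finset.mem_univ l, mul_pos h1 h2⟩

lemma walk_trans {a b : ℕ} {i l j : Fin n} (h1 : 0 < ((cmat n T) ^ a) i l)
    (h2 : 0 < ((cmat n T) ^ b) l j) : 0 < ((cmat n T) ^ (a + b)) i j := by
  rw [pow_add, Matrix.mul_apply]
  exact Finset.sum_pos' (fun m _ => mul_nonneg (pow_nonneg a i m) (pow_nonneg b m j))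
    ⟨l, Finset.mem_univ l, mul_pos h1 h2⟩

lemma walk_climb : ∀ d : ℕ, ∀ i j : Fin n, (i : ℕ) + d = (j : ℕ) →
    0 < ((cmat n T) ^ d) i j := by
  intro d
  induction d with
  | zero => intro i j h; exact walk_zero_iff.mpr (Fin.ext (by omega))
  | succ d ih =>
      intro i j h
      have hj := j.isLt
      have hi1 : (i : ℕ) + 1 < n := by omega
      refine walk_succ_iff'.mpr ⟨⟨(i : ℕ) + 1, hi1⟩, ?_, ?_⟩
      · rw [edge_succ hi1 rfl]; norm_num
      · exact ih _ _ (by simp; omega)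


lemma isCompanion : IsCompanion (cmat n T) := by
  refine ⟨entry01, fun i j h => ?_⟩
  simp only [cmat, Matrix.of_apply, if_pos h]
  split_ifs with hj <;> simp [hj]

lemma col_zero (hn : 0 < n) {j : Fin n} (hj : (j : ℕ) = 0) (h0 : j ∉ T) (i : Fin n) :
    cmat n T i j = 0 := by
  simp only [cmat, Matrix.of_apply]
  by_cases h1 : (i : ℕ) + 1 < n
  · rw [if_pos h1, if_neg (by omega)]
  · rw [if_neg h1, if_neg h0]

lemma not_irr (hn : 0 < n) (h0 : (⟨0, hn⟩ : Fin n) ∉ T) : ¬ IsIrreducibleMat (cmat n T) := by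
  intro hirr
  obtain ⟨k, hk, hpos⟩ := hirr ⟨0, hn⟩ ⟨0, hn⟩
  obtain ⟨k, rfl⟩ : ∃ k', k = k' + 1 := ⟨k - 1, by omega⟩
  rw [pow_succ, Matrix.mul_apply] at hpos
  rw [Finset.sum_eq_zero (fun l _ => by rw [col_zero hn rfl h0 l, mul_zero])] at hpos
  exact lt_irrefl 0 hpos

lemma irr_of_mem (hn : 0 < n) (h0 : (⟨0, hn⟩ : Fin n) ∈ T) : IsIrreducibleMat (cmat n T) := by
  intro i j
  have hi := i.isLt
  have hj := j.isLt
  refine ⟨(n - 1 - (i : ℕ)) + (1 + (j : ℕ)), by omega, ?_⟩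
  refine walk_trans (l := ⟨n - 1, by omega⟩) (walk_climb _ i _ (by simp only [Fin.val_mk]; omega)) ?_
  rw [add_comm 1 (j : ℕ)]
  refine walk_succ_iff'.mpr ⟨⟨0, hn⟩, ?_, walk_climb _ _ j (by simp only [Fin.val_mk]; omega)⟩
  rw [edge_last (by simp only [Fin.val_mk]; omega) h0]; norm_num

lemma walk_mod {p : ℕ} (hpn : p ∣ n) (hT : ∀ j ∈ T, p ∣ n - (j : ℕ)) :
    ∀ m (i j : Fin n), 0 < ((cmat n T) ^ m) i j → ((i : ℕ) + m) % p = (j : ℕ) % p := by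
  intro m
  induction m with
  | zero =>
      intro i j h
      rw [walk_zero_iff.mp h, Nat.add_zero]
  | succ m ih =>
      intro i j h
      obtain ⟨l, hl, he⟩ := walk_succ_iff.mp h
      have ih' : ((i : ℕ) + m) ≡ (l : ℕ) [MOD p] := ih i l hl
      have step : ((i : ℕ) + (m + 1)) ≡ ((l : ℕ) + 1) [MOD p] := by
        have := ih'.add_right 1
        simpa [add_assoc] using this
      rcases edge_cases he with ⟨_, hj⟩ | ⟨hln, hjT⟩
      · rw [← hj] at step; exact step
      · have h1 : (j : ℕ) ≡ n [MOD p] := (Nat.modEq_iff_dvd' (le_of_lt j.isLt)).mpr (hT j hjT)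
        rw [hln] at step
        have h2 : n ≡ 0 [MOD p] := (Nat.modEq_zero_iff_dvd).mpr hpn
        exact step.trans h1.symm

lemma not_primitive (hn : 3 ≤ n) {p : ℕ} (hp : p.Prime) (hpn : p ∣ n)
    (hT : ∀ j ∈ T, p ∣ n - (j : ℕ)) : ¬ _root_.IsPrimitive (cmat n T) := by
  rintro ⟨m, hm, hpos⟩
  have h0 := walk_mod hpn hT m ⟨0, by omega⟩ ⟨0, by omega⟩ (hpos _ _)
  have h1 := walk_mod hpn hT m ⟨0, by omega⟩ ⟨1, by omega⟩ (hpos _ _)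
  simp only [Fin.val_mk, Nat.zero_add, Nat.zero_mod] at h0 h1
  have hp2 := hp.two_le
  rw [Nat.mod_eq_of_lt (by omega : 1 < p)] at h1
  omega

def loopM (n : ℕ) (T : Finset (Fin n)) (hn : 0 < n) : AddSubmonoid ℕ where
  carrier := {s | 0 < ((cmat n T) ^ s) ⟨n - 1, by omega⟩ ⟨n - 1, by omega⟩}
  zero_mem' := walk_zero_iff.mpr rfl
  add_mem' := fun ha hb => walk_trans ha hb

lemma cycle_mem (hn : 0 < n) {j : Fin n} (hj : j ∈ T) : (n - (j : ℕ)) ∈ loopM n T hn := by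
  have hj' : (j : ℕ) < n := j.isLt
  show 0 < ((cmat n T) ^ (n - (j : ℕ))) _ _
  have heq : n - (j : ℕ) = (n - 1 - (j : ℕ)) + 1 := by omega
  rw [heq]
  refine walk_succ_iff'.mpr ⟨j, ?_, walk_climb _ j _ (by simp only [Fin.val_mk]; omega)⟩
  rw [edge_last (by simp only [Fin.val_mk]; omega) hj]; norm_num

lemma gcd_one_primitive (hn : 3 ≤ n) (h0 : (⟨0, by omega⟩ : Fin n) ∈ T)
    (hg : T.gcd (fun j => n - (j : ℕ)) = 1) : _root_.IsPrimitive (cmat n T) := by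
  obtain ⟨a, b, ha, hb, hab⟩ := exists_bezout T (fun j => n - (j : ℕ))
    (loopM n T (by omega)) (fun j hj => cycle_mem _ hj)
  rw [hg] at hab
  have hab' : a = b + 1 := by push_cast at hab; omega
  rw [hab'] at ha
  have pump := add_one_pump (loopM n T (by omega)) b ha hb
  refine ⟨b * b + 2 * n, by omega, ?_⟩
  intro i j
  have hi := i.isLt
  have hj := j.isLt
  have hs : b * b ≤ b * b + 2 * n - (n - 1 - (i : ℕ)) - (1 + (j : ℕ)) := by omega
  have w2 : 0 < ((cmat n T) ^ (b * b + 2 * n - (n - 1 - (i : ℕ)) - (1 + (j : ℕ))))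
      (⟨n - 1, by omega⟩ : Fin n) ⟨n - 1, by omega⟩ := pump _ hs
  have w3 : 0 < ((cmat n T) ^ (1 + (j : ℕ))) (⟨n - 1, by omega⟩ : Fin n) j := by
    rw [add_comm 1 (j : ℕ)]
    refine walk_succ_iff'.mpr ⟨⟨0, by omega⟩, ?_, walk_climb _ _ j (by simp only [Fin.val_mk]; omega)⟩
    rw [edge_last (by simp only [Fin.val_mk]; omega) h0]; norm_num
  have w1 : 0 < ((cmat n T) ^ (n - 1 - (i : ℕ))) i (⟨n - 1, by omega⟩ : Fin n) :=
    walk_climb _ i _ (by simp; omega)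
  have := walk_trans w1 (walk_trans w2 w3)
  have hsum : (n - 1 - (i : ℕ)) + ((b * b + 2 * n - (n - 1 - (i : ℕ)) - (1 + (j : ℕ)))
      + (1 + (j : ℕ))) = b * b + 2 * n := by omega
  rwa [hsum] at this

lemma imprim_iff (hn : 3 ≤ n) (h0 : (⟨0, by omega⟩ : Fin n) ∈ T) :
    ¬ _root_.IsPrimitive (cmat n T) ↔ ∃ p ∈ n.primeFactors, ∀ j ∈ T, p ∣ (n - (j : ℕ)) := by
  constructor
  · intro hnp
    by_contra hc
    push_neg at hc
    apply hnp
    apply gcd_one_primitive hn h0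
    set g := T.gcd (fun j => n - (j : ℕ)) with hgdef
    have hgn : g ∣ n := by
      have := Finset.gcd_dvd (f := fun j : Fin n => n - (j : ℕ)) h0
      simpa using this
    have hgne : g ≠ 0 := by
      intro h
      rw [h] at hgn
      have := Nat.eq_zero_of_zero_dvd hgn
      omega
    by_contra hg1
    have hpf : g.minFac ∈ n.primeFactors :=
      Nat.mem_primeFactors.mpr ⟨Nat.minFac_prime hg1, dvd_trans (Nat.minFac_dvd g) hgn, by omega⟩
    obtain ⟨j, hj, hjd⟩ := hc _ hpf
    exact hjd (dvd_trans (Nat.minFac_dvd g) (Finset.gcd_dvd (f := fun j : Fin n => n - (j : ℕ)) hj))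
  · rintro ⟨p, hp, hT⟩
    have hp' := Nat.mem_primeFactors.mp hp
    exact not_primitive hn hp'.1 hp'.2.1 hT

lemma cmat_last (hn : 0 < n) (j : Fin n) :
    cmat n T ⟨n - 1, by omega⟩ j = if j ∈ T then 1 else 0 := by
  simp only [cmat, Matrix.of_apply, Fin.val_mk]
  rw [if_neg (by omega)]

lemma companion_eq (hn : 3 ≤ n) {A : Matrix (Fin n) (Fin n) ℝ} (hA : IsCompanion A) :
    A = cmat n (Finset.univ.filter (fun j => A ⟨n - 1, by omega⟩ j = 1)) := by
  ext i j
  by_cases h : (i : ℕ) + 1 < n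
  · rw [show cmat n _ i j = if (j : ℕ) = (i : ℕ) + 1 then (1:ℝ) else 0 from by
      simp [cmat, h]]
    by_cases hj : (j : ℕ) = (i : ℕ) + 1
    · rw [if_pos hj, (hA.2 i j h).mpr hj]
    · rw [if_neg hj]
      rcases hA.1 i j with h1 | h1
      · exact h1
      · exact absurd ((hA.2 i j h).mp h1) hj
  · have hi : i = ⟨n - 1, by omega⟩ := Fin.ext (by have := i.isLt; simp only [Fin.val_mk]; omega)
    rcases hA.1 ⟨n - 1, by omega⟩ j with h1 | h1 <;>
      rw [hi, cmat_last (by omega), h1] <;> simp [Finset.mem_filter, h1]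

lemma cmat_inj (hn : 0 < n) : Function.Injective (cmat n) := by
  intro T S h
  ext j
  have h2 : (if j ∈ T then (1:ℝ) else 0) = (if j ∈ S then 1 else 0) := by
    rw [← cmat_last (T := T) hn j, ← cmat_last (T := S) hn j, h]
  split_ifs at h2 <;> first | tauto | norm_num at h2

end Cmat


lemma card_multiples (n d : ℕ) (hn : 0 < n) (hd : d ∣ n) (hd0 : 0 < d) :
    (Finset.univ.filter (fun j : Fin n => d ∣ n - (j : ℕ))).card = n / d := by
  have hdn : n / d * d = n := Nat.div_mul_cancel hd
  rw [← Finset.card_range (n / d)]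
  refine Finset.card_bij' (fun j _ => (n - (j : ℕ)) / d - 1)
    (fun k _ => ⟨n - (k + 1) * d, by have : 0 < (k + 1) * d := Nat.mul_pos (by omega) hd0; omega⟩)
    ?_ ?_ ?_ ?_
  · intro j hj
    have hj' : d ∣ n - (j : ℕ) := (Finset.mem_filter.mp hj).2
    have hjlt := j.isLt
    have h1 : 1 ≤ (n - (j : ℕ)) / d := Nat.one_le_div_iff hd0 |>.mpr (Nat.le_of_dvd (by omega) hj')
    have h2 : (n - (j : ℕ)) / d ≤ n / d := Nat.div_le_div_right (by omega)
    rw [Finset.mem_range]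
    omega
  · intro k hk
    rw [Finset.mem_range] at hk
    have hkd : (k + 1) * d ≤ n := le_trans
      (Nat.mul_le_mul_right d (by omega : k + 1 ≤ n / d)) (le_of_eq hdn)
    refine Finset.mem_filter.mpr ⟨Finset.mem_univ _, ?_⟩
    have : n - (n - (k + 1) * d) = (k + 1) * d := by omega
    rw [show ((⟨n - (k + 1) * d, _⟩ : Fin n) : ℕ) = n - (k + 1) * d from rfl, this]
    exact dvd_mul_left d (k + 1)
  · intro j hj
    have hj' : d ∣ n - (j : ℕ) := (Finset.mem_filter.mp hj).2
    have hjlt := j.isLt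
    have h1 : 1 ≤ (n - (j : ℕ)) / d := Nat.one_le_div_iff hd0 |>.mpr (Nat.le_of_dvd (by omega) hj')
    have h2 : (n - (j : ℕ)) / d * d = n - (j : ℕ) := Nat.div_mul_cancel hj'
    apply Fin.ext
    show n - ((n - (j : ℕ)) / d - 1 + 1) * d = (j : ℕ)
    rw [show (n - (j : ℕ)) / d - 1 + 1 = (n - (j : ℕ)) / d from by omega, h2]
    omega
  · intro k hk
    dsimp only
    rw [Finset.mem_range] at hk
    have hkd : (k + 1) * d ≤ n := le_trans
      (Nat.mul_le_mul_right d (by omega : k + 1 ≤ n / d)) (le_of_eq hdn)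
    show (n - (n - (k + 1) * d)) / d - 1 = k
    rw [show n - (n - (k + 1) * d) = (k + 1) * d from by omega, Nat.mul_div_cancel _ hd0]
    omega

lemma card_subsets_with (m : ℕ) (D : Finset (Fin m)) (z : Fin m) (hz : z ∈ D) :
    (Finset.univ.filter (fun T : Finset (Fin m) => z ∈ T ∧ T ⊆ D)).card = 2 ^ (D.card - 1) := by
  rw [← Finset.card_erase_of_mem hz, ← Finset.card_powerset]
  refine Finset.card_bij' (fun T _ => T.erase z) (fun S _ => insert z S) ?_ ?_ ?_ ?_
  · intro T hT
    rw [Finset.mem_powerset]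
    exact Finset.erase_subset_erase z (Finset.mem_filter.mp hT).2.2
  · intro S hS
    rw [Finset.mem_powerset] at hS
    refine Finset.mem_filter.mpr ⟨Finset.mem_univ _, Finset.mem_insert_self _ _, ?_⟩
    exact Finset.insert_subset hz (subset_trans hS (Finset.erase_subset _ _))
  · intro T hT
    exact Finset.insert_erase (Finset.mem_filter.mp hT).2.1
  · intro S hS
    rw [Finset.mem_powerset] at hS
    exact Finset.erase_insert (fun hzS => Finset.notMem_erase z D (hS hzS))

theorem stmt19 {n : ℕ} (hn : 3 ≤ n) :
    (({A : Matrix (Fin n) (Fin n) ℝ |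
        IsCompanion A ∧ IsIrreducibleMat A ∧ ¬ _root_.IsPrimitive A}.ncard : ℤ)) =
      ∑ S ∈ n.primeFactors.powerset.filter (· ≠ ∅),
        (-1 : ℤ) ^ (S.card + 1) * 2 ^ (n / (∏ p ∈ S, p) - 1) := by
  classical
  set z : Fin n := ⟨0, by omega⟩ with hzdef
  set E : ℕ → Finset (Finset (Fin n)) := fun p =>
    Finset.univ.filter (fun T => z ∈ T ∧ ∀ j ∈ T, p ∣ n - (j : ℕ)) with hEdef
  -- Step A: the set of matrices is the image of the biUnion
  have hset : {A : Matrix (Fin n) (Fin n) ℝ |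
      IsCompanion A ∧ IsIrreducibleMat A ∧ ¬ _root_.IsPrimitive A} =
      cmat n '' ↑(n.primeFactors.biUnion E) := by
    ext A
    constructor
    · rintro ⟨hc, hirr, himp⟩
      set T := Finset.univ.filter (fun j => A ⟨n - 1, by omega⟩ j = 1) with hT
      have hAeq : A = cmat n T := Cmat.companion_eq hn hc
      rw [hAeq] at hirr himp
      have h0 : z ∈ T := by
        by_contra h0
        exact Cmat.not_irr (by omega : 0 < n) h0 hirr
      obtain ⟨p, hp, hall⟩ := (Cmat.imprim_iff hn h0).mp himp
      exact (Set.mem_image _ _ _).mpr ⟨T, Finset.mem_coe.mpr (Finset.mem_biUnion.mpr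
        ⟨p, hp, Finset.mem_filter.mpr ⟨Finset.mem_univ _, h0, hall⟩⟩), hAeq.symm⟩
    · rintro ⟨T, hT, rfl⟩
      rw [Finset.mem_coe, Finset.mem_biUnion] at hT
      obtain ⟨p, hp, hTp⟩ := hT
      obtain ⟨-, h0, hall⟩ := Finset.mem_filter.mp hTp
      exact ⟨Cmat.isCompanion, Cmat.irr_of_mem (by omega : 0 < n) h0,
        (Cmat.imprim_iff hn h0).mpr ⟨p, hp, hall⟩⟩
  have hcard : {A : Matrix (Fin n) (Fin n) ℝ |
      IsCompanion A ∧ IsIrreducibleMat A ∧ ¬ _root_.IsPrimitive A}.ncard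
      = (n.primeFactors.biUnion E).card := by
    rw [hset, Set.ncard_image_of_injective _ (Cmat.cmat_inj (by omega : 0 < n)),
      Set.ncard_coe_finset]
  -- Step B: per-term cardinality
  have key : ∀ t : Finset ℕ, t ⊆ n.primeFactors → ∀ ht : t.Nonempty,
      (t.inf' ht E).card = 2 ^ (n / (∏ p ∈ t, p) - 1) := by
    intro t htsub ht
    set d := ∏ p ∈ t, p with hd
    have hprimes : ∀ p ∈ t, Nat.Prime p := fun p hp => Nat.prime_of_mem_primeFactors (htsub hp)
    have hdvd : d ∣ n := Finset.prod_primes_dvd n (fun p hp => (hprimes p hp).prime)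
      (fun p hp => Nat.dvd_of_mem_primeFactors (htsub hp))
    have hd0 : 0 < d := Finset.prod_pos (fun p hp => (hprimes p hp).pos)
    have hinf : t.inf' ht E = Finset.univ.filter (fun T : Finset (Fin n) =>
        z ∈ T ∧ T ⊆ Finset.univ.filter (fun j : Fin n => d ∣ n - (j : ℕ))) := by
      ext T
      rw [Finset.mem_inf']
      constructor
      · intro h
        obtain ⟨p0, hp0⟩ := ht
        have h0 : z ∈ T := by
          have := Finset.mem_filter.mp (h p0 hp0)
          exact this.2.1
        refine Finset.mem_filter.mpr ⟨Finset.mem_univ _, h0, fun j hj =>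
          Finset.mem_filter.mpr ⟨Finset.mem_univ _, ?_⟩⟩
        exact Finset.prod_primes_dvd _ (fun p hp => (hprimes p hp).prime)
          (fun p hp => (Finset.mem_filter.mp (h p hp)).2.2 j hj)
      · intro h p hp
        obtain ⟨-, h0, hsub⟩ := Finset.mem_filter.mp h
        refine Finset.mem_filter.mpr ⟨Finset.mem_univ _, h0, fun j hj => ?_⟩
        exact dvd_trans (Finset.dvd_prod_of_mem _ hp) ((Finset.mem_filter.mp (hsub hj)).2)
    have hz : z ∈ Finset.univ.filter (fun j : Fin n => d ∣ n - (j : ℕ)) :=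
      Finset.mem_filter.mpr ⟨Finset.mem_univ _, by show d ∣ n - 0; simpa using hdvd⟩
    rw [hinf, card_subsets_with n _ z hz, card_multiples n d (by omega) hdvd hd0]
  -- Step C: inclusion-exclusion
  have hIE := Finset.inclusion_exclusion_card_biUnion n.primeFactors E
  rw [hcard, hIE]
  have hstep : ∀ t : {x // x ∈ n.primeFactors.powerset.filter (Finset.Nonempty ·)},
      (-1 : ℤ) ^ (t.1.card + 1) * ((t.1.inf' (Finset.mem_filter.1 t.2).2 E).card : ℤ)
      = (-1 : ℤ) ^ (t.1.card + 1) * 2 ^ (n / (∏ p ∈ t.1, p) - 1) := by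
    intro t
    rw [key t.1 (Finset.mem_powerset.mp (Finset.mem_filter.mp t.2).1)
      (Finset.mem_filter.1 t.2).2]
    push_cast
    ring
  rw [Finset.sum_congr rfl (fun t _ => hstep t)]
  rw [Finset.sum_coe_sort (n.primeFactors.powerset.filter (Finset.Nonempty ·))
    (fun t => (-1 : ℤ) ^ (t.card + 1) * 2 ^ (n / (∏ p ∈ t, p) - 1))]
  congr 1
  ext x
  simp [Finset.nonempty_iff_ne_empty]
end
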